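/- (Lemma 3.9) The isoperimetric constant of the metric graph G vanishes if and only if the isoperimetric constant at infinity vanishes: α(G) = 0 ⟺ α_ess(G) = 0. -/

import Mathlib

open scoped Classical ENNReal
open MeasureTheory

noncomputable section

/-- A real function on `[0, L]` which is continuous and piecewise continuously
differentiable: there is a finite partition `0 = x 0 < x 1 < ... < x n = L` such that
on each closed piece the function has a continuous derivative. -/
def PiecewiseC1 (f : ℝ → ℝ) (L : ℝ) : Prop :=
  ContinuousOn f (Set.Icc 0 L) ∧
  ∃ (n : ℕ) (x : Fin (n + 1) → ℝ), x 0 = 0 ∧ x (Fin.last n) = L ∧ StrictMono x ∧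
    ∀ i : Fin n, ∃ g : ℝ → ℝ,
      ContinuousOn g (Set.Icc (x i.castSucc) (x i.succ)) ∧
      ∀ t ∈ Set.Icc (x i.castSucc) (x i.succ),
        HasDerivWithinAt f (g t) (Set.Icc (x i.castSucc) (x i.succ)) t

/-- The underlying (unoriented) simple graph of a set of edges `E` with endpoint
map `ends : E → V × V`. -/
def graphOf {V E : Type} (ends : E → V × V) : SimpleGraph V :=
  SimpleGraph.fromRel fun u v => ∃ e, ends e = (u, v)

/-- A metric graph: a connected, locally finite, simple combinatorial graph with
countably infinite vertex and edge sets, each edge having a finite positive length.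
Each edge carries an (auxiliary) orientation given by `ends`. -/
structure MetricGraph : Type 1 where
  V : Type
  E : Type
  countV : Countable V
  infV : Infinite V
  countE : Countable E
  infE : Infinite E
  ends : E → V × V
  len : E → ℝ
  len_pos : ∀ e, 0 < len e
  no_loops : ∀ e, (ends e).1 ≠ (ends e).2
  no_multi : Function.Injective fun e => Sym2.mk (ends e)
  locfin : ∀ v, {e | (ends e).1 = v ∨ (ends e).2 = v}.Finite
  conn : (graphOf ends).Connected

namespace MetricGraph

/-- The underlying simple graph. -/
def graph (Γ : MetricGraph) : SimpleGraph Γ.V := graphOf Γ.ends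

/-- The star of a vertex: the set of edges incident to it. -/
def star (Γ : MetricGraph) (v : Γ.V) : Set Γ.E :=
  {e | (Γ.ends e).1 = v ∨ (Γ.ends e).2 = v}

/-- Combinatorial degree of a vertex. -/
def degree (Γ : MetricGraph) (v : Γ.V) : ℕ := (Γ.locfin v).toFinset.card

/-- The vertices of a (finite) subgraph given by a finite set of edges. -/
def vertsOf (Γ : MetricGraph) (F : Finset Γ.E) : Finset Γ.V :=
  F.image (fun e => (Γ.ends e).1) ∪ F.image fun e => (Γ.ends e).2

/-- The degree of a vertex inside the subgraph given by the edge set `F`. -/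
def degIn (Γ : MetricGraph) (F : Finset Γ.E) (v : Γ.V) : ℕ :=
  (F.filter fun e => (Γ.ends e).1 = v ∨ (Γ.ends e).2 = v).card

/-- Connectedness of the subgraph spanned by the edge set `F`. -/
def SubConn (Γ : MetricGraph) (F : Finset Γ.E) : Prop :=
  ((SimpleGraph.fromRel fun u v => ∃ e ∈ F, Γ.ends e = (u, v)).induce
    (↑(Γ.vertsOf F) : Set Γ.V)).Connected

/-- A finite connected subgraph (with at least one edge), given by its edge set. -/
def IsFinSubgraph (Γ : MetricGraph) (F : Finset Γ.E) : Prop :=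
  F.Nonempty ∧ Γ.SubConn F

/-- The boundary of a finite subgraph with respect to `Γ`: the vertices whose degree
in the subgraph is strictly smaller than the degree in `Γ`. -/
def bdry (Γ : MetricGraph) (F : Finset Γ.E) : Finset Γ.V :=
  (Γ.vertsOf F).filter fun v => Γ.degIn F v < Γ.degree v

/-- `deg (∂_G G̃)`. -/
def degBdry (Γ : MetricGraph) (F : Finset Γ.E) : ℝ :=
  ∑ v ∈ Γ.bdry F, (Γ.degIn F v : ℝ)

/-- The total length (Lebesgue measure) of a finite subgraph. -/
def mes (Γ : MetricGraph) (F : Finset Γ.E) : ℝ := ∑ e ∈ F, Γ.len e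

/-- The isoperimetric (Cheeger) constant of a metric graph. -/
def alpha (Γ : MetricGraph) : ℝ :=
  sInf {r : ℝ | ∃ F : Finset Γ.E, Γ.IsFinSubgraph F ∧ r = Γ.degBdry F / Γ.mes F}

/-- The isoperimetric constant at infinity, as an element of `[0,∞]`. -/
def alphaEssEnn (Γ : MetricGraph) : ℝ≥0∞ :=
  ⨆ W : Finset Γ.E, ⨅ (F : Finset Γ.E) (_ : Γ.IsFinSubgraph F ∧ Disjoint F W),
    ENNReal.ofReal (Γ.degBdry F / Γ.mes F)

/-- The vertex weight `m(v) = Σ_{e ∈ E_v} |e|`. -/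
def mweight (Γ : MetricGraph) (v : Γ.V) : ℝ :=
  ∑ e ∈ (Γ.locfin v).toFinset, Γ.len e

/-- The set of boundary edges of a vertex set: edges with exactly one endpoint in `X`. -/
def Eb (Γ : MetricGraph) (X : Set Γ.V) : Set Γ.E :=
  {e | Xor' ((Γ.ends e).1 ∈ X) ((Γ.ends e).2 ∈ X)}

/-- The discrete isoperimetric constant of a vertex set `U`. -/
def alphaD (Γ : MetricGraph) (U : Set Γ.V) : ℝ :=
  sInf {r : ℝ | ∃ X : Finset Γ.V, ↑X ⊆ U ∧ X.Nonempty ∧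
    r = ((Γ.Eb ↑X).ncard : ℝ) / ∑ v ∈ X, Γ.mweight v}

/-- The discrete isoperimetric constant at infinity, as an element of `[0,∞]`. -/
def alphaDEssEnn (Γ : MetricGraph) : ℝ≥0∞ :=
  ⨆ X : Finset Γ.V, ENNReal.ofReal (Γ.alphaD (↑X : Set Γ.V)ᶜ)

/-- The combinatorial isoperimetric constant. -/
def alphaComb (Γ : MetricGraph) : ℝ :=
  sInf {r : ℝ | ∃ X : Finset Γ.V, X.Nonempty ∧
    r = ((Γ.Eb ↑X).ncard : ℝ) / ∑ v ∈ X, (Γ.degree v : ℝ)}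

/-- `ℓ*(G) = sup of edge lengths`. -/
def ellSup (Γ : MetricGraph) : ℝ := sSup (Set.range Γ.len)

/-- `ℓ_*(G) = inf of edge lengths`. -/
def ellInf (Γ : MetricGraph) : ℝ := sInf (Set.range Γ.len)

/-- `ℓ*(G)` as an element of `[0,∞]`. -/
def ellSupEnn (Γ : MetricGraph) : ℝ≥0∞ := ⨆ e : Γ.E, ENNReal.ofReal (Γ.len e)

/-- `ℓ*_ess(G) = inf_F sup_{e ∉ F} |e|` as an element of `[0,∞]`. -/
def ellSupEssEnn (Γ : MetricGraph) : ℝ≥0∞ :=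
  ⨅ W : Finset Γ.E, ⨆ e : {e : Γ.E // e ∉ W}, ENNReal.ofReal (Γ.len (e : Γ.E))

/-- Outgoing edges at a vertex (for the fixed orientation). -/
def plusE (Γ : MetricGraph) (v : Γ.V) : Set Γ.E := {e | (Γ.ends e).1 = v}

/-- Incoming edges at a vertex (for the fixed orientation). -/
def minusE (Γ : MetricGraph) (v : Γ.V) : Set Γ.E := {e | (Γ.ends e).2 = v}

/-- The curvature `K(v) = ((#E_v⁺ − #E_v⁻)/#E_v⁺) · inf_{e ∈ E_v⁺} 1/|e|`. -/
def Kcurv (Γ : MetricGraph) (v : Γ.V) : ℝ :=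
  (((Γ.plusE v).ncard : ℝ) - ((Γ.minusE v).ncard : ℝ)) / ((Γ.plusE v).ncard : ℝ) *
    sInf ((fun e => 1 / Γ.len e) '' Γ.plusE v)

/-- The combinatorial curvature `K_comb(v) = 1 − #E_v⁻/#E_v⁺`. -/
def Kcomb (Γ : MetricGraph) (v : Γ.V) : ℝ :=
  1 - ((Γ.minusE v).ncard : ℝ) / ((Γ.plusE v).ncard : ℝ)

/-- `liminf_{v ∈ V} K(v) = sup over finite W of inf_{v ∉ W} K(v)`, in `[0,∞]`. -/
def KcurvEssEnn (Γ : MetricGraph) : ℝ≥0∞ :=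
  ⨆ W : Finset Γ.V, ⨅ v : {v : Γ.V // v ∉ W}, ENNReal.ofReal (Γ.Kcurv (v : Γ.V))

/-- `liminf_{v ∈ V} K_comb(v) = sup over finite W of inf_{v ∉ W} K_comb(v)`. -/
def KcombLiminf (Γ : MetricGraph) : ℝ :=
  sSup (Set.range fun W : Finset Γ.V => sInf (Γ.Kcomb '' (↑W : Set Γ.V)ᶜ))

/-- The value of an edgewise function at an endpoint of an edge. -/
def endVal (Γ : MetricGraph) (f : Γ.E → ℝ → ℝ) (e : Γ.E) (v : Γ.V) : ℝ :=
  if (Γ.ends e).1 = v then f e 0 else f e (Γ.len e)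

/-- A test function on the metric graph `Γ`: a family of continuous, piecewise `C¹`
functions on the edges, matching at the vertices, vanishing on all but finitely
many edges. -/
structure TestFun (Γ : MetricGraph) where
  f : Γ.E → ℝ → ℝ
  piecewise : ∀ e, PiecewiseC1 (f e) (Γ.len e)
  vertexCont : ∀ e e' : Γ.E, ∀ v : Γ.V, e ∈ Γ.star v → e' ∈ Γ.star v →
    Γ.endVal f e v = Γ.endVal f e' v
  finSupp : {e : Γ.E | ∃ x ∈ Set.Icc 0 (Γ.len e), f e x ≠ 0}.Finite

/-- `‖f‖² = Σ_e ∫₀^{|e|} f_e(x)² dx`. -/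
def TestFun.normSq {Γ : MetricGraph} (φ : TestFun Γ) : ℝ :=
  ∑ᶠ e : Γ.E, ∫ x in (0:ℝ)..Γ.len e, (φ.f e x) ^ 2

/-- `‖f′‖² = Σ_e ∫₀^{|e|} f_e′(x)² dx`. -/
def TestFun.energySq {Γ : MetricGraph} (φ : TestFun Γ) : ℝ :=
  ∑ᶠ e : Γ.E, ∫ x in (0:ℝ)..Γ.len e, (deriv (φ.f e) x) ^ 2

/-- A test function is nonzero if it does not vanish identically on the graph. -/
def TestFun.Nonzero {Γ : MetricGraph} (φ : TestFun Γ) : Prop :=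
  ∃ e : Γ.E, ∃ x ∈ Set.Icc 0 (Γ.len e), φ.f e x ≠ 0

/-- The bottom of the spectrum of the Kirchhoff Laplacian, via the variational
(Rayleigh quotient) characterization. -/
def lambda0 (Γ : MetricGraph) : ℝ :=
  sInf {r : ℝ | ∃ φ : TestFun Γ, φ.Nonzero ∧ r = φ.energySq / φ.normSq}

end MetricGraph

/-- A weighted graph `(V, m, b)`: a connected, locally finite, simple combinatorial
graph with countably infinite vertex and edge sets, an edge weight `b` and a vertex
weight `m`. -/
structure WeightedGraph : Type 1 where
  V : Type
  E : Type
  countV : Countable V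
  infV : Infinite V
  countE : Countable E
  infE : Infinite E
  ends : E → V × V
  no_loops : ∀ e, (ends e).1 ≠ (ends e).2
  no_multi : Function.Injective fun e => Sym2.mk (ends e)
  locfin : ∀ v, {e | (ends e).1 = v ∨ (ends e).2 = v}.Finite
  conn : (graphOf ends).Connected
  b : E → ℝ
  b_pos : ∀ e, 0 < b e
  m : V → ℝ
  m_pos : ∀ v, 0 < m v

namespace WeightedGraph

/-- An edge weight `d` is intrinsic if `Σ_{e ∈ E_v} d(e)² b(e) ≤ m(v)` for all `v`. -/
def Intrinsic (Γ : WeightedGraph) (d : Γ.E → ℝ) : Prop :=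
  ∀ v, ∑ e ∈ (Γ.locfin v).toFinset, d e ^ 2 * Γ.b e ≤ Γ.m v

/-- The boundary edges of a vertex set: edges with exactly one endpoint in `X`. -/
def Eb (Γ : WeightedGraph) (X : Set Γ.V) : Set Γ.E :=
  {e | Xor' ((Γ.ends e).1 ∈ X) ((Γ.ends e).2 ∈ X)}

/-- The discrete isoperimetric constant `α_d(U)` with respect to the weight `d`. -/
def alphaD (Γ : WeightedGraph) (d : Γ.E → ℝ) (U : Set Γ.V) : ℝ :=
  sInf {r : ℝ | ∃ X : Finset Γ.V, ↑X ⊆ U ∧ X.Nonempty ∧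
    r = (∑ᶠ e ∈ Γ.Eb ↑X, d e * Γ.b e) / ∑ v ∈ X, Γ.m v}

/-- The discrete isoperimetric constant at infinity, in `[0,∞]`. -/
def alphaDEssEnn (Γ : WeightedGraph) (d : Γ.E → ℝ) : ℝ≥0∞ :=
  ⨆ X : Finset Γ.V, ENNReal.ofReal (Γ.alphaD d (↑X : Set Γ.V)ᶜ)

/-- The energy form `Q(u) = Σ_e b(e) (u(e_i) − u(e_0))²`. -/
def Q (Γ : WeightedGraph) (u : Γ.V → ℝ) : ℝ :=
  ∑ᶠ e : Γ.E, Γ.b e * (u (Γ.ends e).2 - u (Γ.ends e).1) ^ 2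

/-- The squared norm `Σ_v m(v) u(v)²`. -/
def normSqD (Γ : WeightedGraph) (u : Γ.V → ℝ) : ℝ :=
  ∑ᶠ v : Γ.V, Γ.m v * u v ^ 2

/-- The bottom of the spectrum of the Friedrichs extension of the weighted Laplacian,
via the variational characterization over finitely supported functions. -/
def lambda0 (Γ : WeightedGraph) : ℝ :=
  sInf {r : ℝ | ∃ u : Γ.V → ℝ, (Function.support u).Finite ∧ u ≠ 0 ∧
    r = Γ.Q u / Γ.normSqD u}

/-- The bottom of the essential spectrum of the Friedrichs extension, via Glazman's
decomposition principle, in `[0,∞]`. -/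
def lambda0EssEnn (Γ : WeightedGraph) : ℝ≥0∞ :=
  ⨆ X : Finset Γ.V, ⨅ (u : Γ.V → ℝ)
    (_ : (Function.support u).Finite ∧ u ≠ 0 ∧ ∀ v ∈ X, u v = 0),
      ENNReal.ofReal (Γ.Q u / Γ.normSqD u)

end WeightedGraph

end

noncomputable section
namespace MetricGraph

variable (Γ : MetricGraph)

lemma mem_vertsOf {F : Finset Γ.E} {v : Γ.V} :
    v ∈ Γ.vertsOf F ↔ ∃ e ∈ F, (Γ.ends e).1 = v ∨ (Γ.ends e).2 = v := by
  simp only [vertsOf, Finset.mem_union, Finset.mem_image]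
  constructor
  · rintro (⟨e, he, h⟩ | ⟨e, he, h⟩)
    exacts [⟨e, he, Or.inl h⟩, ⟨e, he, Or.inr h⟩]
  · rintro ⟨e, he, (h | h)⟩
    exacts [Or.inl ⟨e, he, h⟩, Or.inr ⟨e, he, h⟩]

lemma vertsOf_mono {F F' : Finset Γ.E} (h : F ⊆ F') : Γ.vertsOf F ⊆ Γ.vertsOf F' := by
  intro v hv
  obtain ⟨e, he, hinc⟩ := Γ.mem_vertsOf.mp hv
  exact Γ.mem_vertsOf.mpr ⟨e, h he, hinc⟩

lemma mes_nonneg (F : Finset Γ.E) : 0 ≤ Γ.mes F :=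
  Finset.sum_nonneg fun e _ => (Γ.len_pos e).le

lemma mes_pos {F : Finset Γ.E} (hF : F.Nonempty) : 0 < Γ.mes F :=
  Finset.sum_pos (fun e _ => Γ.len_pos e) hF

lemma degBdry_nonneg (F : Finset Γ.E) : 0 ≤ Γ.degBdry F :=
  Finset.sum_nonneg fun v _ => by positivity

lemma degIn_le_degree (F : Finset Γ.E) (v : Γ.V) : Γ.degIn F v ≤ Γ.degree v :=
  Finset.card_le_card fun e he => by
    rw [Set.Finite.mem_toFinset]
    exact (Finset.mem_filter.mp he).2

lemma edge_mem_of_degIn_eq {F : Finset Γ.E} {v : Γ.V} (h : Γ.degIn F v = Γ.degree v) {e : Γ.E}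
    (hinc : (Γ.ends e).1 = v ∨ (Γ.ends e).2 = v) : e ∈ F := by
  have hsub : F.filter (fun e => (Γ.ends e).1 = v ∨ (Γ.ends e).2 = v) ⊆ (Γ.locfin v).toFinset := by
    intro g hg
    rw [Set.Finite.mem_toFinset]
    exact (Finset.mem_filter.mp hg).2
  have heq := Finset.eq_of_subset_of_card_le hsub (le_of_eq h.symm)
  have : e ∈ (Γ.locfin v).toFinset := by rw [Set.Finite.mem_toFinset]; exact hinc
  rw [← heq] at this
  exact (Finset.mem_filter.mp this).1

lemma degIn_pos_of_mem_vertsOf {F : Finset Γ.E} {v : Γ.V} (h : v ∈ Γ.vertsOf F) :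
    1 ≤ Γ.degIn F v := by
  obtain ⟨e, he, hinc⟩ := Γ.mem_vertsOf.mp h
  exact Finset.card_pos.mpr ⟨e, Finset.mem_filter.mpr ⟨he, hinc⟩⟩

lemma bdry_nonempty {F : Finset Γ.E} (hF : F.Nonempty) : (Γ.bdry F).Nonempty := by
  by_contra hb
  rw [Finset.not_nonempty_iff_eq_empty] at hb
  have hfull : ∀ v ∈ Γ.vertsOf F, Γ.degIn F v = Γ.degree v := by
    intro v hv
    by_contra hne
    have : v ∈ Γ.bdry F :=
      Finset.mem_filter.mpr ⟨hv, lt_of_le_of_ne (Γ.degIn_le_degree F v) hne⟩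
    simp [hb] at this
  have key : ∀ (u w : Γ.V), (graphOf Γ.ends).Walk u w → u ∈ Γ.vertsOf F → w ∈ Γ.vertsOf F := by
    intro u w p
    induction p with
    | nil => exact id
    | @cons a b c h p ih =>
      intro ha
      apply ih
      have h' : (SimpleGraph.fromRel fun x y => ∃ e, Γ.ends e = (x, y)).Adj a b := h
      rw [SimpleGraph.fromRel_adj] at h'
      have hE : ∃ e, Γ.ends e = (a, b) ∨ Γ.ends e = (b, a) := by
        obtain ⟨-, (⟨e, he⟩ | ⟨e, he⟩)⟩ := h'
        exacts [⟨e, Or.inl he⟩, ⟨e, Or.inr he⟩]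
      obtain ⟨e, he⟩ := hE
      have hinc : (Γ.ends e).1 = a ∨ (Γ.ends e).2 = a := by
        rcases he with he | he <;> simp [he]
      have heF : e ∈ F := Γ.edge_mem_of_degIn_eq (hfull a ha) hinc
      exact Γ.mem_vertsOf.mpr ⟨e, heF, by rcases he with he | he <;> simp [he]⟩
  obtain ⟨e0, he0⟩ := hF
  have hu0 : (Γ.ends e0).1 ∈ Γ.vertsOf F := Γ.mem_vertsOf.mpr ⟨e0, he0, Or.inl rfl⟩
  haveI := Γ.infV
  obtain ⟨w, hw⟩ := Infinite.exists_notMem_finset (Γ.vertsOf F)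
  obtain ⟨p⟩ := Γ.conn.preconnected (Γ.ends e0).1 w
  exact hw (key _ _ p hu0)

lemma one_le_degBdry {F : Finset Γ.E} (hF : F.Nonempty) : 1 ≤ Γ.degBdry F := by
  obtain ⟨v, hv⟩ := Γ.bdry_nonempty hF
  have hv' : v ∈ Γ.vertsOf F := (Finset.mem_filter.mp hv).1
  have h1 : (1 : ℝ) ≤ (Γ.degIn F v : ℝ) := by
    exact_mod_cast Γ.degIn_pos_of_mem_vertsOf hv'
  calc (1 : ℝ) ≤ (Γ.degIn F v : ℝ) := h1
    _ ≤ Γ.degBdry F :=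
      Finset.single_le_sum (f := fun v => (Γ.degIn F v : ℝ)) (fun i _ => by positivity) hv

lemma adj_of_edge {F : Finset Γ.E} {g : Γ.E} (hg : g ∈ F) {u v : Γ.V}
    (hu : (Γ.ends g).1 = u ∨ (Γ.ends g).2 = u) (hv : (Γ.ends g).1 = v ∨ (Γ.ends g).2 = v)
    (huv : u ≠ v) :
    (SimpleGraph.fromRel fun a b => ∃ e ∈ F, Γ.ends e = (a, b)).Adj u v := by
  rw [SimpleGraph.fromRel_adj]
  refine ⟨huv, ?_⟩
  rcases hu with hu | hu <;> rcases hv with hv | hv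
  · exact absurd (hu.symm.trans hv) huv
  · subst hu; subst hv; exact Or.inl ⟨g, hg, Prod.mk.eta.symm⟩
  · subst hu; subst hv; exact Or.inr ⟨g, hg, Prod.mk.eta.symm⟩
  · exact absurd (hu.symm.trans hv) huv

lemma isFinSubgraph_single (e : Γ.E) : Γ.IsFinSubgraph {e} := by
  refine ⟨⟨e, Finset.mem_singleton_self e⟩, ?_⟩
  rw [SubConn, SimpleGraph.connected_iff]
  refine ⟨?_, ⟨⟨(Γ.ends e).1, Γ.mem_vertsOf.mpr ⟨e, Finset.mem_singleton_self e, Or.inl rfl⟩⟩⟩⟩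
  rintro ⟨u, hu⟩ ⟨v, hv⟩
  obtain ⟨eu, heu, hincu⟩ := Γ.mem_vertsOf.mp hu
  obtain ⟨ev, hev, hincv⟩ := Γ.mem_vertsOf.mp hv
  rw [Finset.mem_singleton] at heu hev
  rw [heu] at hincu; rw [hev] at hincv
  by_cases h : u = v
  · subst h; exact SimpleGraph.Reachable.refl _
  · exact SimpleGraph.Adj.reachable
      (Γ.adj_of_edge (Finset.mem_singleton_self e) hincu hincv h)

end MetricGraph
end
noncomputable section
namespace MetricGraph

variable (Γ : MetricGraph)

/-- Two edges of `A` sharing a vertex. -/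
def Touch (A : Finset Γ.E) (g h : Γ.E) : Prop :=
  g ∈ A ∧ h ∈ A ∧ ∃ v, ((Γ.ends g).1 = v ∨ (Γ.ends g).2 = v) ∧
    ((Γ.ends h).1 = v ∨ (Γ.ends h).2 = v)

lemma touch_symm (A : Finset Γ.E) : Symmetric (Γ.Touch A) :=
  fun _ _ ⟨hg, hh, v, h1, h2⟩ => ⟨hh, hg, v, h2, h1⟩

/-- The connected component (edge set) of `e` inside the edge set `A`. -/
def cls (A : Finset Γ.E) (e : Γ.E) : Finset Γ.E :=
  A.filter fun g => Relation.ReflTransGen (Γ.Touch A) e g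

lemma cls_subset (A : Finset Γ.E) (e : Γ.E) : Γ.cls A e ⊆ A := Finset.filter_subset _ _

lemma mem_cls_self {A : Finset Γ.E} {e : Γ.E} (he : e ∈ A) : e ∈ Γ.cls A e :=
  Finset.mem_filter.mpr ⟨he, Relation.ReflTransGen.refl⟩

lemma mem_cls_of_touch {A : Finset Γ.E} {e g h : Γ.E} (hg : g ∈ Γ.cls A e)
    (ht : Γ.Touch A g h) : h ∈ Γ.cls A e :=
  Finset.mem_filter.mpr ⟨ht.2.1, (Finset.mem_filter.mp hg).2.tail ht⟩

lemma cls_eq_of_mem {A : Finset Γ.E} {e g : Γ.E} (hg : g ∈ Γ.cls A e) :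
    Γ.cls A g = Γ.cls A e := by
  have hsymm : Symmetric (Relation.ReflTransGen (Γ.Touch A)) := by
    haveI : Std.Symm (Γ.Touch A) := ⟨fun x y h => Γ.touch_symm A h⟩
    exact fun x y h => Std.Symm.symm x y h
  have hge := (Finset.mem_filter.mp hg).2
  ext h
  simp only [cls, Finset.mem_filter]
  constructor
  · rintro ⟨hA, hr⟩; exact ⟨hA, hge.trans hr⟩
  · rintro ⟨hA, hr⟩; exact ⟨hA, (hsymm hge).trans hr⟩

lemma cls_disjoint_or_eq (A : Finset Γ.E) (e1 e2 : Γ.E) :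
    Γ.cls A e1 = Γ.cls A e2 ∨ Disjoint (Γ.cls A e1) (Γ.cls A e2) := by
  by_cases h : ∃ g, g ∈ Γ.cls A e1 ∧ g ∈ Γ.cls A e2
  · obtain ⟨g, h1, h2⟩ := h
    exact Or.inl ((Γ.cls_eq_of_mem h1).symm.trans (Γ.cls_eq_of_mem h2))
  · push_neg at h
    exact Or.inr (Finset.disjoint_left.mpr fun {g} hg1 hg2 => h g hg1 hg2)

lemma cls_eq_of_common_vertex {A : Finset Γ.E} {e1 e2 : Γ.E} {v : Γ.V}
    (h1 : v ∈ Γ.vertsOf (Γ.cls A e1)) (h2 : v ∈ Γ.vertsOf (Γ.cls A e2)) :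
    Γ.cls A e1 = Γ.cls A e2 := by
  obtain ⟨g1, hg1, hinc1⟩ := Γ.mem_vertsOf.mp h1
  obtain ⟨g2, hg2, hinc2⟩ := Γ.mem_vertsOf.mp h2
  have ht : Γ.Touch A g1 g2 :=
    ⟨Γ.cls_subset A e1 hg1, Γ.cls_subset A e2 hg2, v, hinc1, hinc2⟩
  have hg2' : g2 ∈ Γ.cls A e1 := Γ.mem_cls_of_touch hg1 ht
  exact (Γ.cls_eq_of_mem hg2').symm.trans (Γ.cls_eq_of_mem hg2)

lemma degIn_cls_eq {A : Finset Γ.E} {e : Γ.E} {v : Γ.V} (hv : v ∈ Γ.vertsOf (Γ.cls A e)) :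
    Γ.degIn (Γ.cls A e) v = Γ.degIn A v := by
  unfold degIn
  congr 1
  apply Finset.Subset.antisymm
  · exact Finset.filter_subset_filter _ (Γ.cls_subset A e)
  · intro g hg
    rw [Finset.mem_filter] at hg ⊢
    obtain ⟨h0, hh0, hinc0⟩ := Γ.mem_vertsOf.mp hv
    exact ⟨Γ.mem_cls_of_touch hh0 ⟨Γ.cls_subset A e hh0, hg.1, v, hinc0, hg.2⟩, hg.2⟩

lemma subConn_cls {A : Finset Γ.E} {e : Γ.E} (he : e ∈ A) : Γ.SubConn (Γ.cls A e) := by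
  rw [SubConn, SimpleGraph.connected_iff]
  have hbase : (Γ.ends e).1 ∈ Γ.vertsOf (Γ.cls A e) :=
    Γ.mem_vertsOf.mpr ⟨e, Γ.mem_cls_self he, Or.inl rfl⟩
  refine ⟨?_, ⟨⟨_, hbase⟩⟩⟩
  have key : ∀ g, Relation.ReflTransGen (Γ.Touch A) e g →
      ∀ (u : Γ.V), ((Γ.ends g).1 = u ∨ (Γ.ends g).2 = u) →
      ∀ (hu' : u ∈ Γ.vertsOf (Γ.cls A e)),
      ((SimpleGraph.fromRel fun a b => ∃ e' ∈ Γ.cls A e, Γ.ends e' = (a, b)).induce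
        ↑(Γ.vertsOf (Γ.cls A e))).Reachable ⟨(Γ.ends e).1, hbase⟩ ⟨u, hu'⟩ := by
    intro g hg
    induction hg with
    | refl =>
      intro u hu hu'
      by_cases h : (Γ.ends e).1 = u
      · have : (⟨(Γ.ends e).1, hbase⟩ : ↑(↑(Γ.vertsOf (Γ.cls A e)) : Set Γ.V)) = ⟨u, hu'⟩ :=
          Subtype.ext h
        rw [this]
      · exact SimpleGraph.Adj.reachable
          (Γ.adj_of_edge (Γ.mem_cls_self he) (Or.inl rfl) hu h)
    | @tail b c h1 htouch ih =>
      intro u hu hu'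
      obtain ⟨hbA, hcA, w, hwb, hwc⟩ := htouch
      have hbY : b ∈ Γ.cls A e := Finset.mem_filter.mpr ⟨hbA, h1⟩
      have hcY : c ∈ Γ.cls A e := Finset.mem_filter.mpr ⟨hcA, h1.tail ⟨hbA, hcA, w, hwb, hwc⟩⟩
      have hwY : w ∈ Γ.vertsOf (Γ.cls A e) := Γ.mem_vertsOf.mpr ⟨b, hbY, hwb⟩
      have r1 := ih w hwb hwY
      by_cases h : w = u
      · subst h; exact r1
      · exact r1.trans (SimpleGraph.Adj.reachable (Γ.adj_of_edge hcY hwc hu h))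
  rintro ⟨x, hx⟩ ⟨y, hy⟩
  obtain ⟨gx, hgx, hincx⟩ := Γ.mem_vertsOf.mp hx
  obtain ⟨gy, hgy, hincy⟩ := Γ.mem_vertsOf.mp hy
  exact ((key gx (Finset.mem_filter.mp hgx).2 x hincx hx).symm).trans
    (key gy (Finset.mem_filter.mp hgy).2 y hincy hy)

end MetricGraph
end
noncomputable section

lemma exists_ratio_le' {ι : Type} (s : Finset ι) (hs : s.Nonempty) (a b : ι → ℝ)
    (ha : ∀ i ∈ s, 0 ≤ a i) (hb : ∀ i ∈ s, 0 < b i) {N D : ℝ}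
    (hN : ∑ i ∈ s, a i ≤ N) (hD : D ≤ ∑ i ∈ s, b i) (hD0 : 0 < D) (h0N : 0 ≤ N) :
    ∃ i ∈ s, a i / b i ≤ N / D := by
  by_contra h
  push_neg at h
  have hlt : ∀ i ∈ s, (N / D) * b i < a i := by
    intro i hi
    have h2 := h i hi
    rw [lt_div_iff₀ (hb i hi)] at h2
    exact h2
  have hsum : ∑ i ∈ s, (N / D) * b i < ∑ i ∈ s, a i :=
    Finset.sum_lt_sum_of_nonempty hs hlt
  rw [← Finset.mul_sum] at hsum
  have h1 : N ≤ (N / D) * ∑ i ∈ s, b i := by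
    have h2 : (N / D) * D ≤ (N / D) * ∑ i ∈ s, b i :=
      mul_le_mul_of_nonneg_left hD (div_nonneg h0N hD0.le)
    rwa [div_mul_cancel₀ N hD0.ne'] at h2
  linarith

namespace MetricGraph

variable (Γ : MetricGraph)

lemma exists_good_disjoint
    (h0 : ∀ δ > 0, ∃ F : Finset Γ.E, Γ.IsFinSubgraph F ∧ Γ.degBdry F / Γ.mes F < δ)
    (W : Finset Γ.E) {ε : ℝ} (hε : 0 < ε) :
    ∃ Y : Finset Γ.E, (Γ.IsFinSubgraph Y ∧ Disjoint Y W) ∧ Γ.degBdry Y / Γ.mes Y < ε := by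
  set T := Γ.vertsOf W with hT
  set NB := T ∪ T.biUnion (fun w => Γ.vertsOf (Γ.locfin w).toFinset) with hNB
  set EW := T.biUnion (fun w => (Γ.locfin w).toFinset) with hEW
  set C := ∑ v ∈ NB, (Γ.degree v : ℝ) with hC
  set M := ∑ e ∈ EW, Γ.len e with hM
  have hC0 : 0 ≤ C := by rw [hC]; exact Finset.sum_nonneg fun v _ => by positivity
  have hM0 : 0 ≤ M := by rw [hM]; exact Finset.sum_nonneg fun e _ => (Γ.len_pos e).le
  set δ := min (ε / (2 * (C + 1))) (1 / (2 * (M + 1))) with hδdef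
  have hδ0 : 0 < δ := by rw [hδdef]; exact lt_min (by positivity) (by positivity)
  have hδ1 : δ ≤ ε / (2 * (C + 1)) := by rw [hδdef]; exact min_le_left _ _
  have hδ2 : δ ≤ 1 / (2 * (M + 1)) := by rw [hδdef]; exact min_le_right _ _
  obtain ⟨F, hF, hFδ⟩ := h0 δ hδ0
  have hmes : 0 < Γ.mes F := Γ.mes_pos hF.1
  have hdb : Γ.degBdry F < δ * Γ.mes F := by
    rw [div_lt_iff₀ hmes] at hFδ; linarith
  have h1db : 1 ≤ Γ.degBdry F := Γ.one_le_degBdry hF.1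
  have hbig : 1 < δ * Γ.mes F := lt_of_le_of_lt h1db hdb
  have hmesM : 2 * (M + 1) < Γ.mes F := by
    have h3 : δ * Γ.mes F ≤ (1 / (2 * (M + 1))) * Γ.mes F :=
      mul_le_mul_of_nonneg_right hδ2 hmes.le
    have h2 : 1 < (1 / (2 * (M + 1))) * Γ.mes F := lt_of_lt_of_le hbig h3
    rw [div_mul_eq_mul_div, one_mul, lt_div_iff₀ (by positivity)] at h2
    linarith
  set A := F.filter (fun g => (Γ.ends g).1 ∉ T ∧ (Γ.ends g).2 ∉ T) with hA
  have hAF : A ⊆ F := by rw [hA]; exact Finset.filter_subset _ _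
  have hsplit : Γ.mes A
      + Γ.mes (F.filter (fun g => ¬((Γ.ends g).1 ∉ T ∧ (Γ.ends g).2 ∉ T))) = Γ.mes F := by
    simp only [mes, hA]
    exact Finset.sum_filter_add_sum_filter_not F _ _
  have hrest : Γ.mes (F.filter (fun g => ¬((Γ.ends g).1 ∉ T ∧ (Γ.ends g).2 ∉ T))) ≤ M := by
    rw [hM]
    simp only [mes]
    apply Finset.sum_le_sum_of_subset_of_nonneg
    · intro g hg
      rw [Finset.mem_filter] at hg
      obtain ⟨hgF, hg2⟩ := hg
      rw [not_and_or, not_not, not_not] at hg2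
      rcases hg2 with h | h
      · exact Finset.mem_biUnion.mpr ⟨_, h, (Set.Finite.mem_toFinset _).mpr (Or.inl rfl)⟩
      · exact Finset.mem_biUnion.mpr ⟨_, h, (Set.Finite.mem_toFinset _).mpr (Or.inr rfl)⟩
    · intro e _ _; exact (Γ.len_pos e).le
  have hmesA : Γ.mes F - M ≤ Γ.mes A := by linarith
  have hmesA2 : Γ.mes F / 2 ≤ Γ.mes A := by linarith
  have hApos : 0 < Γ.mes A := by linarith
  have hAne : A.Nonempty := by
    rw [Finset.nonempty_iff_ne_empty]
    intro h
    rw [h] at hApos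
    simp [mes] at hApos
  have hdisjW : ∀ {Y : Finset Γ.E}, Y ⊆ A → Disjoint Y W := by
    intro Y hY
    rw [Finset.disjoint_left]
    intro g hgY hgW
    have hgA := hY hgY
    rw [hA, Finset.mem_filter] at hgA
    exact hgA.2.1 (Γ.mem_vertsOf.mpr ⟨g, hgW, Or.inl rfl⟩)
  have hdegEq : ∀ v, v ∉ NB → Γ.degIn A v = Γ.degIn F v := by
    intro v hv
    unfold degIn
    congr 1
    apply Finset.Subset.antisymm (Finset.filter_subset_filter _ hAF)
    intro g hg
    rw [Finset.mem_filter] at hg ⊢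
    refine ⟨?_, hg.2⟩
    rw [hA, Finset.mem_filter]
    refine ⟨hg.1, ?_, ?_⟩
    · intro hmem
      apply hv
      rw [hNB]
      apply Finset.mem_union_right
      exact Finset.mem_biUnion.mpr
        ⟨_, hmem, Γ.mem_vertsOf.mpr ⟨g, (Set.Finite.mem_toFinset _).mpr (Or.inl rfl), hg.2⟩⟩
    · intro hmem
      apply hv
      rw [hNB]
      apply Finset.mem_union_right
      exact Finset.mem_biUnion.mpr
        ⟨_, hmem, Γ.mem_vertsOf.mpr ⟨g, (Set.Finite.mem_toFinset _).mpr (Or.inr rfl), hg.2⟩⟩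
  set B' := (Γ.vertsOf A).filter (fun v => Γ.degIn A v < Γ.degree v) with hB'
  have hNS : ∑ v ∈ B', (Γ.degIn A v : ℝ) ≤ Γ.degBdry F + C := by
    have hsplit2 : ∑ v ∈ B', (Γ.degIn A v : ℝ)
        = ∑ v ∈ B'.filter (fun v => v ∈ NB), (Γ.degIn A v : ℝ)
          + ∑ v ∈ B'.filter (fun v => v ∉ NB), (Γ.degIn A v : ℝ) :=
      (Finset.sum_filter_add_sum_filter_not B' _ _).symm
    have hb1 : ∑ v ∈ B'.filter (fun v => v ∈ NB), (Γ.degIn A v : ℝ) ≤ C := by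
      rw [hC]
      calc ∑ v ∈ B'.filter (fun v => v ∈ NB), (Γ.degIn A v : ℝ)
          ≤ ∑ v ∈ B'.filter (fun v => v ∈ NB), (Γ.degree v : ℝ) :=
            Finset.sum_le_sum fun v _ => by exact_mod_cast Γ.degIn_le_degree A v
        _ ≤ ∑ v ∈ NB, (Γ.degree v : ℝ) := Finset.sum_le_sum_of_subset_of_nonneg
            (fun v hv => (Finset.mem_filter.mp hv).2) (fun v _ _ => by positivity)
    have hb2 : ∑ v ∈ B'.filter (fun v => v ∉ NB), (Γ.degIn A v : ℝ) ≤ Γ.degBdry F := by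
      have heq : ∀ v ∈ B'.filter (fun v => v ∉ NB), (Γ.degIn A v : ℝ) = (Γ.degIn F v : ℝ) := by
        intro v hv
        rw [hdegEq v (Finset.mem_filter.mp hv).2]
      rw [Finset.sum_congr rfl heq]
      unfold degBdry
      apply Finset.sum_le_sum_of_subset_of_nonneg
      · intro v hv
        rw [Finset.mem_filter] at hv
        obtain ⟨hvB, hvNB⟩ := hv
        rw [hB', Finset.mem_filter] at hvB
        rw [bdry, Finset.mem_filter]
        refine ⟨Γ.vertsOf_mono hAF hvB.1, ?_⟩
        rw [← hdegEq v hvNB]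
        exact hvB.2
      · intro v _ _; positivity
    linarith
  set Cset := A.image (Γ.cls A) with hCset
  have hCne : Cset.Nonempty := hAne.image _
  have hpd : (↑Cset : Set (Finset Γ.E)).PairwiseDisjoint id := by
    intro Y1 h1 Y2 h2 hne
    simp only [hCset, Finset.coe_image, Set.mem_image, Finset.mem_coe] at h1 h2
    obtain ⟨e1, -, rfl⟩ := h1
    obtain ⟨e2, -, rfl⟩ := h2
    rcases Γ.cls_disjoint_or_eq A e1 e2 with h | h
    · exact absurd h hne
    · exact h
  have hbi : Cset.biUnion id = A := by
    ext g
    simp only [Finset.mem_biUnion, id]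
    constructor
    · rintro ⟨Y, hY, hgY⟩
      simp only [hCset, Finset.mem_image] at hY
      obtain ⟨e', -, rfl⟩ := hY
      exact Γ.cls_subset A e' hgY
    · intro hg
      exact ⟨Γ.cls A g, by
        rw [hCset]; exact Finset.mem_image_of_mem _ hg, Γ.mem_cls_self hg⟩
  have hmesSum : ∑ Y ∈ Cset, Γ.mes Y = Γ.mes A := by
    simp only [mes]
    rw [← hbi, Finset.sum_biUnion hpd]
    rfl
  have hpdb : (↑Cset : Set (Finset Γ.E)).PairwiseDisjoint Γ.bdry := by
    intro Y1 h1 Y2 h2 hne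
    simp only [hCset, Finset.coe_image, Set.mem_image, Finset.mem_coe] at h1 h2
    obtain ⟨e1, -, rfl⟩ := h1
    obtain ⟨e2, -, rfl⟩ := h2
    exact Finset.disjoint_left.mpr fun {v} hv1 hv2 => hne
      (Γ.cls_eq_of_common_vertex (Finset.mem_filter.mp hv1).1 (Finset.mem_filter.mp hv2).1)
  have hdegSum : ∑ Y ∈ Cset, Γ.degBdry Y ≤ ∑ v ∈ B', (Γ.degIn A v : ℝ) := by
    have step1 : ∀ Y ∈ Cset, Γ.degBdry Y = ∑ v ∈ Γ.bdry Y, (Γ.degIn A v : ℝ) := by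
      intro Y hY
      simp only [hCset, Finset.mem_image] at hY
      obtain ⟨e', -, rfl⟩ := hY
      unfold degBdry
      apply Finset.sum_congr rfl
      intro v hv
      rw [Γ.degIn_cls_eq (Finset.mem_filter.mp hv).1]
    rw [Finset.sum_congr rfl step1, ← Finset.sum_biUnion hpdb]
    apply Finset.sum_le_sum_of_subset_of_nonneg
    · intro v hv
      rw [Finset.mem_biUnion] at hv
      obtain ⟨Y, hY, hvY⟩ := hv
      simp only [hCset, Finset.mem_image] at hY
      obtain ⟨e', -, rfl⟩ := hY
      rw [bdry, Finset.mem_filter] at hvY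
      rw [hB', Finset.mem_filter]
      refine ⟨Γ.vertsOf_mono (Γ.cls_subset A e') hvY.1, ?_⟩
      rw [← Γ.degIn_cls_eq hvY.1]
      exact hvY.2
    · intro v _ _; positivity
  obtain ⟨Y, hYC, hYr⟩ := exists_ratio_le' (D := Γ.mes F / 2) Cset hCne Γ.degBdry Γ.mes
    (fun Y _ => Γ.degBdry_nonneg Y)
    (fun Y hY => by
      simp only [hCset, Finset.mem_image] at hY
      obtain ⟨e', he', rfl⟩ := hY
      exact Γ.mes_pos ⟨e', Γ.mem_cls_self he'⟩)
    (le_trans hdegSum hNS)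
    (by rw [hmesSum]; exact hmesA2)
    (by linarith)
    (by linarith)
  simp only [hCset, Finset.mem_image] at hYC
  obtain ⟨e', he', rfl⟩ := hYC
  refine ⟨Γ.cls A e',
    ⟨⟨⟨e', Γ.mem_cls_self he'⟩, Γ.subConn_cls he'⟩, hdisjW (Γ.cls_subset A e')⟩, ?_⟩
  refine lt_of_le_of_lt hYr ?_
  rw [div_lt_iff₀ (by linarith : 0 < Γ.mes F / 2)]
  have hδ1' : δ * (2 * (C + 1)) ≤ ε := by
    calc δ * (2 * (C + 1)) ≤ (ε / (2 * (C + 1))) * (2 * (C + 1)) :=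
          mul_le_mul_of_nonneg_right hδ1 (by positivity)
      _ = ε := div_mul_cancel₀ ε (by positivity)
  nlinarith [mul_nonneg hC0 (by linarith : (0:ℝ) ≤ δ * Γ.mes F - 1),
    mul_le_mul_of_nonneg_right hδ1' (le_of_lt hmes)]

end MetricGraph
end
/-- **Lemma 3.9.** `α(G) = 0 ⟺ α_ess(G) = 0`. -/
theorem alpha_eq_zero_iff_alphaEss_eq_zero (Γ : MetricGraph) :
    Γ.alpha = 0 ↔ Γ.alphaEssEnn = 0 := by
  haveI := Γ.infE
  have halpha : Γ.alpha
      = sInf {r : ℝ | ∃ F : Finset Γ.E, Γ.IsFinSubgraph F ∧ r = Γ.degBdry F / Γ.mes F} := rfl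
  have hSne : {r : ℝ | ∃ F : Finset Γ.E, Γ.IsFinSubgraph F ∧ r = Γ.degBdry F / Γ.mes F}.Nonempty := by
    obtain ⟨e, -⟩ := Infinite.exists_notMem_finset (∅ : Finset Γ.E)
    exact ⟨_, {e}, Γ.isFinSubgraph_single e, rfl⟩
  have hSnonneg : ∀ r ∈ {r : ℝ | ∃ F : Finset Γ.E, Γ.IsFinSubgraph F ∧ r = Γ.degBdry F / Γ.mes F},
      0 ≤ r := by
    rintro r ⟨F, hF, rfl⟩
    exact div_nonneg (Γ.degBdry_nonneg F) (Γ.mes_nonneg F)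
  have hbdd : BddBelow {r : ℝ | ∃ F : Finset Γ.E, Γ.IsFinSubgraph F ∧ r = Γ.degBdry F / Γ.mes F} :=
    ⟨0, hSnonneg⟩
  constructor
  · intro h0
    have hsmall : ∀ δ > (0:ℝ), ∃ F : Finset Γ.E,
        Γ.IsFinSubgraph F ∧ Γ.degBdry F / Γ.mes F < δ := by
      intro δ hδ
      have hlt : sInf {r : ℝ | ∃ F : Finset Γ.E, Γ.IsFinSubgraph F ∧ r = Γ.degBdry F / Γ.mes F}
          < δ := by rw [← halpha, h0]; exact hδ
      obtain ⟨r, hrS, hr⟩ := exists_lt_of_csInf_lt hSne hlt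
      obtain ⟨F, hF, rfl⟩ := hrS
      exact ⟨F, hF, hr⟩
    unfold MetricGraph.alphaEssEnn
    rw [ENNReal.iSup_eq_zero]
    intro W
    by_contra hne
    have hpos : 0 < ⨅ (F : Finset Γ.E) (_ : Γ.IsFinSubgraph F ∧ Disjoint F W),
        ENNReal.ofReal (Γ.degBdry F / Γ.mes F) := pos_iff_ne_zero.mpr hne
    obtain ⟨r, hr0, hr1, hr2⟩ := ENNReal.lt_iff_exists_real_btwn.mp hpos
    have hrpos : 0 < r := ENNReal.ofReal_pos.mp (lt_of_le_of_lt zero_le hr1)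
    obtain ⟨Y, ⟨hY, hYW⟩, hYr⟩ := Γ.exists_good_disjoint hsmall W hrpos
    have hle : (⨅ (F : Finset Γ.E) (_ : Γ.IsFinSubgraph F ∧ Disjoint F W),
        ENNReal.ofReal (Γ.degBdry F / Γ.mes F)) ≤ ENNReal.ofReal (Γ.degBdry Y / Γ.mes Y) :=
      iInf_le_of_le Y (iInf_le_of_le ⟨hY, hYW⟩ le_rfl)
    have : ENNReal.ofReal (Γ.degBdry Y / Γ.mes Y) < ENNReal.ofReal r :=
      (ENNReal.ofReal_lt_ofReal_iff hrpos).mpr hYr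
    exact absurd (lt_of_le_of_lt hle (lt_of_lt_of_le this hr2.le)) (lt_irrefl _)
  · intro hess
    unfold MetricGraph.alphaEssEnn at hess
    rw [ENNReal.iSup_eq_zero] at hess
    have h₀ := hess ∅
    have hsmall : ∀ ε > (0:ℝ), ∃ r ∈
        {r : ℝ | ∃ F : Finset Γ.E, Γ.IsFinSubgraph F ∧ r = Γ.degBdry F / Γ.mes F}, r < ε := by
      intro ε hε
      have hlt : (⨅ (F : Finset Γ.E) (_ : Γ.IsFinSubgraph F ∧ Disjoint F ∅),
          ENNReal.ofReal (Γ.degBdry F / Γ.mes F)) < ENNReal.ofReal ε := by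
        rw [h₀]; exact ENNReal.ofReal_pos.mpr hε
      rw [iInf_lt_iff] at hlt
      obtain ⟨F, hF⟩ := hlt
      rw [iInf_lt_iff] at hF
      obtain ⟨⟨hF1, -⟩, hF2⟩ := hF
      refine ⟨Γ.degBdry F / Γ.mes F, ⟨F, hF1, rfl⟩, ?_⟩
      by_cases h : 0 < Γ.degBdry F / Γ.mes F
      · exact (ENNReal.ofReal_lt_ofReal_iff hε).mp hF2
      · push_neg at h; linarith
    have h1 : Γ.alpha ≤ 0 := by
      by_contra h
      push_neg at h
      obtain ⟨r, hrS, hr⟩ := hsmall _ h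
      have := csInf_le hbdd hrS
      rw [← halpha] at this
      linarith
    have h2 : 0 ≤ Γ.alpha := by
      rw [halpha]; exact le_csInf hSne hSnonneg
    linarith
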